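/- Let S : ℝ^d → V(m) be measurable and Q a cube. If ω(Q,S) = 0 then there exists a subset F ⊆ Q with |Q \ F| = 0 and a unit vector u ∈ ℂ^m such that u ∈ S(x) for every x ∈ F. -/

import Mathlib

open MeasureTheory

noncomputable instance {m : ℕ} : MeasurableSpace (EuclideanSpace ℂ (Fin m)) := borel _
instance {m : ℕ} : BorelSpace (EuclideanSpace ℂ (Fin m)) := ⟨rfl⟩

/-- The axis-parallel cube in `ℝ^d` with lower corner `x` and side length `ℓ`. -/
def Cube {d : ℕ} (x : Fin d → ℝ) (ℓ : ℝ) : Set (Fin d → ℝ) :=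
  {y | ∀ i, y i ∈ Set.Icc (x i) (x i + ℓ)}

/-- A subspace-valued mapping `S : ℝ^d → V(m)` is measurable if it is spanned pointwise by
finitely many measurable vector-valued functions. -/
def MeasSubspaceMap {d m : ℕ}
    (S : (Fin d → ℝ) → Submodule ℂ (EuclideanSpace ℂ (Fin m))) : Prop :=
  ∃ (k : ℕ) (v : Fin k → (Fin d → ℝ) → EuclideanSpace ℂ (Fin m)),
    (∀ i, Measurable (v i)) ∧ ∀ x, S x = Submodule.span ℂ (Set.range fun i => v i x)

/-- The unit sections of `S` on `Q`: measurable `v` with `v(x) ∈ S(x)` and `|v(x)| = 1`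
a.e. on `Q`. -/
def unitSections {d m : ℕ} (Q : Set (Fin d → ℝ))
    (S : (Fin d → ℝ) → Submodule ℂ (EuclideanSpace ℂ (Fin m))) :
    Set ((Fin d → ℝ) → EuclideanSpace ℂ (Fin m)) :=
  {v | Measurable v ∧ ∀ᵐ x ∂(volume.restrict Q), v x ∈ S x ∧ ‖v x‖ = 1}

/-- The average `(1/|Q|) ∫_Q v`. -/
noncomputable def avg {d m : ℕ} (Q : Set (Fin d → ℝ))
    (v : (Fin d → ℝ) → EuclideanSpace ℂ (Fin m)) : EuclideanSpace ℂ (Fin m) :=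
  (volume Q).toReal⁻¹ • ∫ y in Q, v y

/-- The oscillation `ω(Q,S)` of a subspace-valued mapping on a cube. -/
noncomputable def osc {d m : ℕ} (Q : Set (Fin d → ℝ))
    (S : (Fin d → ℝ) → Submodule ℂ (EuclideanSpace ℂ (Fin m))) : ℝ :=
  sInf ((fun v => Real.sqrt ((volume Q).toReal⁻¹ * ∫ y in Q, ‖v y - avg Q v‖ ^ 2)) ''
    unitSections Q S)

/-! ### Auxiliary lemmas -/
set_option maxHeartbeats 1000000

open Classical in
noncomputable def firstNZ {α : Type*} [MeasurableSpace α] {m : ℕ} :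
    (k : ℕ) → (Fin k → α → EuclideanSpace ℂ (Fin m)) → α → EuclideanSpace ℂ (Fin m)
  | 0, _, _ => 0
  | (k+1), v, x => if v 0 x = 0 then firstNZ k (fun i => v i.succ) x else v 0 x

open Classical in
theorem firstNZ_succ {α : Type*} [MeasurableSpace α] {m : ℕ} (k : ℕ)
    (v : Fin (k+1) → α → EuclideanSpace ℂ (Fin m)) (x : α) :
    firstNZ (k+1) v x = if v 0 x = 0 then firstNZ k (fun i => v i.succ) x else v 0 x := rfl

theorem firstNZ_meas {α : Type*} [MeasurableSpace α] {m : ℕ} :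
    ∀ (k : ℕ) (v : Fin k → α → EuclideanSpace ℂ (Fin m)), (∀ i, Measurable (v i)) →
      Measurable (firstNZ k v)
  | 0, _, _ => measurable_const
  | (k+1), v, hv => by
      have h1 : MeasurableSet {x | v 0 x = 0} := (hv 0) (measurableSet_singleton 0)
      classical
      have : Measurable fun x => if v 0 x = 0 then firstNZ k (fun i => v i.succ) x else v 0 x :=
        Measurable.ite (f := fun x => firstNZ k (fun i => v i.succ) x) (g := v 0) h1
        (firstNZ_meas k _ (fun i => hv i.succ)) (hv 0)
      exact this

theorem firstNZ_spec {α : Type*} [MeasurableSpace α] {m : ℕ} :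
    ∀ (k : ℕ) (v : Fin k → α → EuclideanSpace ℂ (Fin m)) (x : α),
      (∃ i, v i x ≠ 0) → firstNZ k v x ≠ 0 ∧ ∃ i, firstNZ k v x = v i x
  | 0, _, _, h => absurd h (by simp)
  | (k+1), v, x, h => by
      rw [firstNZ_succ]
      by_cases h0 : v 0 x = 0
      · have h' : ∃ i : Fin k, v i.succ x ≠ 0 := by
          obtain ⟨i, hi⟩ := h
          rcases Fin.eq_zero_or_eq_succ i with rfl | ⟨j, rfl⟩
          · exact absurd h0 hi
          · exact ⟨j, hi⟩
        obtain ⟨hne, j, hj⟩ := firstNZ_spec k (fun i => v i.succ) x h'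
        refine ⟨by simp [h0, hne], ⟨j.succ, by simp [h0, hj]⟩⟩
      · exact ⟨by simp [h0], ⟨0, by simp [h0]⟩⟩

theorem exists_unit_section {d m : ℕ}
    (S : (Fin d → ℝ) → Submodule ℂ (EuclideanSpace ℂ (Fin m)))
    (hS : MeasSubspaceMap S) (hnt : ∀ x, S x ≠ ⊥) :
    ∃ g : (Fin d → ℝ) → EuclideanSpace ℂ (Fin m),
      Measurable g ∧ ∀ x, g x ∈ S x ∧ ‖g x‖ = 1 := by
  obtain ⟨k, v, hv, hspan⟩ := hS
  set f := firstNZ k v with hf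
  have hex : ∀ x, ∃ i, v i x ≠ 0 := by
    intro x
    by_contra h
    push_neg at h
    apply hnt x
    rw [hspan x, Submodule.span_eq_bot]
    rintro y ⟨i, rfl⟩
    exact h i
  have hfm : Measurable f := firstNZ_meas k v hv
  refine ⟨fun x => ((‖f x‖ : ℂ))⁻¹ • f x, ?_, ?_⟩
  · exact ((Complex.measurable_ofReal.comp hfm.norm).inv).smul hfm
  · intro x
    obtain ⟨hne, i, hi⟩ := firstNZ_spec k v x (hex x)
    constructor
    · apply Submodule.smul_mem
      rw [hspan x, show f x = v i x from hi]
      exact Submodule.subset_span ⟨i, rfl⟩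
    · rw [norm_smul]
      have h1 : ‖f x‖ ≠ 0 := norm_ne_zero_iff.2 hne
      simp
      field_simp

theorem key_integral {d m : ℕ} {Q : Set (Fin d → ℝ)}
    (hQ1 : volume Q ≠ ⊤) (hQ2 : volume Q ≠ 0)
    {v : (Fin d → ℝ) → EuclideanSpace ℂ (Fin m)} (hvm : Measurable v)
    (hv1 : ∀ᵐ y ∂(volume.restrict Q), ‖v y‖ = 1) (c : EuclideanSpace ℂ (Fin m)) :
    ∫ y in Q, ‖v y - c‖ ^ 2 =
      (volume Q).toReal * (1 - 2 * Complex.re (inner ℂ c (avg Q v)) + ‖c‖ ^ 2) := by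
  set μ := volume.restrict Q with hμ
  have hfin : IsFiniteMeasure μ := by
    constructor; rw [hμ, Measure.restrict_apply_univ]; exact hQ1.lt_top
  have hasm : AEStronglyMeasurable v μ := hvm.aestronglyMeasurable
  have hint : Integrable v μ := by
    refine ⟨hasm, ?_⟩
    refine HasFiniteIntegral.of_bounded (C := 1) ?_
    filter_upwards [hv1] with y hy using le_of_eq hy
  have htr : (volume Q).toReal ≠ 0 := by
    simp [ENNReal.toReal_eq_zero_iff, hQ1, hQ2]
  have hIv : ∫ y, v y ∂μ = (volume Q).toReal • avg Q v := by
    rw [avg, smul_smul, mul_inv_cancel₀ htr, one_smul]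
  set L : EuclideanSpace ℂ (Fin m) →L[ℝ] ℝ :=
    Complex.reCLM.comp ((innerSL ℂ c).restrictScalars ℝ) with hL
  have hLdef : ∀ w, L w = Complex.re (inner ℂ c w) := fun w => rfl
  have hpt : ∀ y, ‖v y - c‖ ^ 2 = ‖v y‖ ^ 2 - 2 * L (v y) + ‖c‖ ^ 2 := by
    intro y
    rw [hLdef, @norm_sub_sq ℂ, inner_re_symm]
    norm_num
  have hi1 : Integrable (fun y => ‖v y‖ ^ 2) μ := by
    refine ⟨(hvm.norm.pow_const 2).aestronglyMeasurable, ?_⟩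
    refine HasFiniteIntegral.of_bounded (C := 1) ?_
    filter_upwards [hv1] with y hy
    simp [hy]
  have hi2 : Integrable (fun y => L (v y)) μ := L.integrable_comp hint
  calc ∫ y, ‖v y - c‖ ^ 2 ∂μ
      = ∫ y, (‖v y‖ ^ 2 - 2 * L (v y) + ‖c‖ ^ 2) ∂μ := by
        exact integral_congr_ae (Filter.Eventually.of_forall hpt)
    _ = (∫ y, ‖v y‖ ^ 2 ∂μ) - 2 * (∫ y, L (v y) ∂μ) + (volume Q).toReal * ‖c‖ ^ 2 := by
        have hsub : Integrable (fun y => ‖v y‖ ^ 2 - 2 * L (v y)) μ := hi1.sub (hi2.const_mul 2)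
        rw [integral_add hsub (integrable_const _),
          integral_sub hi1 (hi2.const_mul 2), integral_const_mul, integral_const]
        simp [hμ, measureReal_def, Measure.restrict_apply_univ, smul_eq_mul]
    _ = (volume Q).toReal - 2 * ((volume Q).toReal * Complex.re (inner ℂ c (avg Q v)))
          + (volume Q).toReal * ‖c‖ ^ 2 := by
        congr 1
        · congr 1
          · have : ∫ y, ‖v y‖ ^ 2 ∂μ = ∫ _, (1:ℝ) ∂μ := by
              refine integral_congr_ae ?_
              filter_upwards [hv1] with y hy
              simp [hy]
            rw [this, integral_const]
            simp [hμ, measureReal_def, Measure.restrict_apply_univ, smul_eq_mul]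
          · congr 1
            rw [L.integral_comp_comm hint, hIv, _root_.map_smul, smul_eq_mul, hLdef]
    _ = (volume Q).toReal * (1 - 2 * Complex.re (inner ℂ c (avg Q v)) + ‖c‖ ^ 2) := by ring

/-- If the oscillation of a measurable subspace-valued mapping `S` on a cube `Q`
vanishes, then there is a full-measure subset `F ⊆ Q` and a unit vector `u ∈ ℂ^m` with
`u ∈ S(x)` for every `x ∈ F`. -/
theorem stmt_7 {d m : ℕ} (S : (Fin d → ℝ) → Submodule ℂ (EuclideanSpace ℂ (Fin m)))
    (hS : MeasSubspaceMap S) (hnt : ∀ x, S x ≠ ⊥)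
    (x : Fin d → ℝ) (ℓ : ℝ) (hℓ : 0 < ℓ)
    (h0 : osc (Cube x ℓ) S = 0) :
    ∃ F ⊆ Cube x ℓ, volume (Cube x ℓ \ F) = 0 ∧
      ∃ u : EuclideanSpace ℂ (Fin m), ‖u‖ = 1 ∧ ∀ y ∈ F, u ∈ S y := by
  classical
  set Q := Cube x ℓ with hQdef
  set μ := volume.restrict Q with hμ
  have hQpi : Q = Set.pi Set.univ (fun i => Set.Icc (x i) (x i + ℓ)) := by
    ext y; simp [hQdef, Cube, Set.mem_pi, Set.mem_Icc, Pi.le_def, forall_and]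
  have hQm : MeasurableSet Q := by
    rw [hQpi]; exact MeasurableSet.univ_pi fun i => measurableSet_Icc
  have hvolQ : volume Q = ENNReal.ofReal ℓ ^ d := by
    rw [hQpi, volume_pi_pi]; simp [Real.volume_Icc]
  have hQ1 : volume Q ≠ ⊤ := by
    rw [hvolQ]; exact (ENNReal.pow_lt_top ENNReal.ofReal_lt_top).ne
  have hQ2 : volume Q ≠ 0 := by
    rw [hvolQ]; exact pow_ne_zero d (ENNReal.ofReal_pos.2 hℓ).ne'
  set T := (volume Q).toReal with hT
  have hTpos : 0 < T := ENNReal.toReal_pos hQ2 hQ1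
  have hfin : IsFiniteMeasure μ := by
    constructor; rw [hμ, Measure.restrict_apply_univ]; exact hQ1.lt_top
  -- unit sections are nonempty
  obtain ⟨g, hgm, hg⟩ := exists_unit_section S hS hnt
  have hg_mem : g ∈ unitSections Q S := ⟨hgm, Filter.Eventually.of_forall fun y => hg y⟩
  -- a minimizing sequence
  have hseq : ∀ n : ℕ, ∃ w ∈ unitSections Q S,
      Real.sqrt (T⁻¹ * ∫ y in Q, ‖w y - avg Q w‖ ^ 2) < ((n : ℝ) + 2)⁻¹ := by
    intro n
    have hne : ((fun v => Real.sqrt (T⁻¹ * ∫ y in Q, ‖v y - avg Q v‖ ^ 2)) ''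
        unitSections Q S).Nonempty := ⟨_, Set.mem_image_of_mem _ hg_mem⟩
    have hlt : sInf ((fun v => Real.sqrt (T⁻¹ * ∫ y in Q, ‖v y - avg Q v‖ ^ 2)) ''
        unitSections Q S) < ((n : ℝ) + 2)⁻¹ := by
      have : osc Q S = sInf ((fun v => Real.sqrt (T⁻¹ * ∫ y in Q, ‖v y - avg Q v‖ ^ 2)) ''
          unitSections Q S) := rfl
      rw [← this, h0]
      positivity
    obtain ⟨r, ⟨w, hw, rfl⟩, hr⟩ := exists_lt_of_csInf_lt hne hlt
    exact ⟨w, hw, hr⟩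
  choose w hw hwlt using hseq
  set a : ℕ → EuclideanSpace ℂ (Fin m) := fun n => avg Q (w n) with ha
  have hnorm1 : ∀ n, ∀ᵐ y ∂μ, ‖w n y‖ = 1 := fun n => ((hw n).2).mono fun y h => h.2
  have hSmem : ∀ n, ∀ᵐ y ∂μ, w n y ∈ S y := fun n => ((hw n).2).mono fun y h => h.1
  -- the basic identity
  have hkey : ∀ n (c : EuclideanSpace ℂ (Fin m)),
      ∫ y in Q, ‖w n y - c‖ ^ 2 = T * (1 - 2 * Complex.re (inner ℂ c (a n)) + ‖c‖ ^ 2) :=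
    fun n c => key_integral hQ1 hQ2 (hw n).1 (hnorm1 n) c
  have hreaa : ∀ n, Complex.re (inner ℂ (a n) (a n)) = ‖a n‖ ^ 2 := by
    intro n
    have := @inner_self_eq_norm_sq ℂ _ _ _ _ (a n)
    simpa [RCLike.re_to_complex] using this
  have hquot : ∀ n, T⁻¹ * ∫ y in Q, ‖w n y - a n‖ ^ 2 = 1 - ‖a n‖ ^ 2 := by
    intro n
    rw [hkey n (a n), hreaa n]
    field_simp
    ring
  have hnn : ∀ n, 0 ≤ 1 - ‖a n‖ ^ 2 := by
    intro n
    rw [← hquot n]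
    have : 0 ≤ ∫ y in Q, ‖w n y - a n‖ ^ 2 := integral_nonneg fun y => by positivity
    positivity
  have hlt2 : ∀ n, 1 - ‖a n‖ ^ 2 < (((n : ℝ) + 2)⁻¹) ^ 2 := by
    intro n
    have h1 : Real.sqrt (1 - ‖a n‖ ^ 2) < ((n : ℝ) + 2)⁻¹ := by
      rw [← hquot n]; exact hwlt n
    exact (Real.sqrt_lt' (by positivity)).1 h1
  have ha_le1 : ∀ n, ‖a n‖ ≤ 1 := by
    intro n
    nlinarith [hnn n, norm_nonneg (a n)]
  have ha_pos : ∀ n, 0 < ‖a n‖ := by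
    intro n
    have ht : (0:ℝ) ≤ ((n : ℝ) + 2)⁻¹ := by positivity
    have h2 : (((n : ℝ) + 2)⁻¹) ≤ (2:ℝ)⁻¹ := by
      apply inv_anti₀ (by norm_num)
      linarith [Nat.cast_nonneg (α := ℝ) n]
    have h3 : (((n : ℝ) + 2)⁻¹) ^ 2 ≤ (1:ℝ)/4 := by nlinarith
    nlinarith [hlt2 n, norm_nonneg (a n)]
  set u' : ℕ → EuclideanSpace ℂ (Fin m) := fun n => ((‖a n‖ : ℂ))⁻¹ • a n with hu'
  have hu'_norm : ∀ n, ‖u' n‖ = 1 := by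
    intro n
    rw [hu']
    simp only [norm_smul]
    simp [(ha_pos n).ne']
  have hinner_u'a : ∀ n, Complex.re (inner ℂ (u' n) (a n)) = ‖a n‖ := by
    intro n
    have : (inner ℂ (u' n) (a n) : ℂ) = ((‖a n‖ : ℂ)) := by
      rw [hu', inner_smul_left, inner_self_eq_norm_sq_to_K, map_inv₀, Complex.conj_ofReal]
      have hz : (‖a n‖ : ℂ) ≠ 0 := by exact_mod_cast (ha_pos n).ne'
      field_simp
      rfl
    rw [this, Complex.ofReal_re]
  have hJ : ∀ n, ∫ y in Q, ‖w n y - u' n‖ ^ 2 ≤ 2 * T * (((n : ℝ) + 2)⁻¹) ^ 2 := by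
    intro n
    rw [hkey n (u' n), hinner_u'a n, hu'_norm n]
    have h1 : 1 - 2 * ‖a n‖ + 1 ^ 2 = 2 * (1 - ‖a n‖) := by ring
    rw [h1]
    have h2 : 1 - ‖a n‖ ≤ 1 - ‖a n‖ ^ 2 := by nlinarith [ha_le1 n, norm_nonneg (a n)]
    nlinarith [hlt2 n, hTpos]
  -- compactness of the sphere
  have hu'_mem : ∀ n, u' n ∈ Metric.sphere (0 : EuclideanSpace ℂ (Fin m)) 1 := by
    intro n; simpa [mem_sphere_zero_iff_norm] using hu'_norm n
  obtain ⟨u, hu_sph, φ, hφ, hconv⟩ :=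
    (isCompact_sphere (0 : EuclideanSpace ℂ (Fin m)) 1).tendsto_subseq hu'_mem
  have hu_norm : ‖u‖ = 1 := mem_sphere_zero_iff_norm.1 hu_sph
  -- the Chebyshev estimate
  have hcheb : ∀ δ : ℝ, 0 < δ →
      volume ({y | δ ≤ Metric.infDist u ((S y : Set (EuclideanSpace ℂ (Fin m))))} ∩ Q) = 0 := by
    intro δ hδ
    set B := {y | δ ≤ Metric.infDist u ((S y : Set (EuclideanSpace ℂ (Fin m))))} ∩ Q with hB
    have hBQ : volume B ≤ volume Q := measure_mono Set.inter_subset_right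
    have hBfin : volume B ≠ ⊤ := (lt_of_le_of_lt hBQ hQ1.lt_top).ne
    have hbound : ∀ n, (volume B).toReal ≤
        (2 * T * ‖u - u' (φ n)‖ ^ 2 + 4 * T * (((φ n : ℝ) + 2)⁻¹) ^ 2) / δ ^ 2 := by
      intro n
      set wn := w (φ n) with hwn
      set un := u' (φ n) with hun
      have hwnm : Measurable wn := (hw (φ n)).1
      have hfm : Measurable (fun y => ‖u - wn y‖) := (measurable_const.sub hwnm).norm
      -- exceptional null set
      set N := toMeasurable μ {y | ¬ (wn y ∈ S y)} with hN
      have hNm : MeasurableSet N := measurableSet_toMeasurable _ _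
      have hNnull : μ N = 0 := by
        rw [measure_toMeasurable]
        exact ae_iff.mp (hSmem (φ n))
      -- B is covered
      have hsub : B ⊆ ({y | δ ≤ ‖u - wn y‖} ∩ Q) ∪ (N ∩ Q) := by
        rintro y ⟨hy1, hy2⟩
        by_cases hyN : y ∈ N
        · exact Or.inr ⟨hyN, hy2⟩
        · left
          refine ⟨?_, hy2⟩
          have hmem : wn y ∈ S y := by
            by_contra hc
            exact hyN (subset_toMeasurable _ _ hc)
          have := Metric.infDist_le_dist_of_mem (x := u) hmem
          rw [dist_eq_norm] at this
          exact le_trans hy1 this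
      have hNQ : volume (N ∩ Q) = 0 := by
        have : μ N = volume (N ∩ Q) := by rw [hμ, Measure.restrict_apply hNm]
        rw [← this, hNnull]
      have hAm : MeasurableSet {y | δ ≤ ‖u - wn y‖} := by
        have he : {y | δ ≤ ‖u - wn y‖} = (fun y => ‖u - wn y‖) ⁻¹' Set.Ici δ := rfl
        rw [he]; exact hfm measurableSet_Ici
      have hAeq : volume ({y | δ ≤ ‖u - wn y‖} ∩ Q) = μ {y | δ ≤ ‖u - wn y‖} := by
        rw [hμ, Measure.restrict_apply hAm]
      have hBle : volume B ≤ μ {y | δ ≤ ‖u - wn y‖} := by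
        calc volume B ≤ volume (({y | δ ≤ ‖u - wn y‖} ∩ Q) ∪ (N ∩ Q)) := measure_mono hsub
          _ ≤ volume ({y | δ ≤ ‖u - wn y‖} ∩ Q) + volume (N ∩ Q) := measure_union_le _ _
          _ = μ {y | δ ≤ ‖u - wn y‖} := by rw [hNQ, hAeq, add_zero]
      -- Chebyshev
      have hintg : Integrable (fun y => ‖u - wn y‖ ^ 2) μ := by
        refine ⟨(hfm.pow_const 2).aestronglyMeasurable, ?_⟩
        refine HasFiniteIntegral.of_bounded (C := 4) ?_
        filter_upwards [hnorm1 (φ n)] with y hy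
        have : ‖u - wn y‖ ≤ 2 := by
          calc ‖u - wn y‖ ≤ ‖u‖ + ‖wn y‖ := norm_sub_le _ _
            _ = 2 := by rw [hu_norm, hy]; norm_num
        have h0' : (0:ℝ) ≤ ‖u - wn y‖ := norm_nonneg _
        simp only [Real.norm_eq_abs, abs_pow, abs_of_nonneg h0']
        nlinarith
      have hcheb1 : δ ^ 2 * (μ {y | δ ^ 2 ≤ ‖u - wn y‖ ^ 2}).toReal
          ≤ ∫ y, ‖u - wn y‖ ^ 2 ∂μ :=
        mul_meas_ge_le_integral_of_nonneg
          (Filter.Eventually.of_forall fun y => by positivity) hintg _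
      have hss : {y | δ ≤ ‖u - wn y‖} ⊆ {y | δ ^ 2 ≤ ‖u - wn y‖ ^ 2} := by
        intro y hy
        exact pow_le_pow_left₀ hδ.le hy 2
      -- bound on the integral
      have hIb : ∫ y, ‖u - wn y‖ ^ 2 ∂μ
          ≤ 2 * T * ‖u - un‖ ^ 2 + 4 * T * (((φ n : ℝ) + 2)⁻¹) ^ 2 := by
        have hpt : ∀ y, ‖u - wn y‖ ^ 2 ≤ 2 * ‖u - un‖ ^ 2 + 2 * ‖wn y - un‖ ^ 2 := by
          intro y
          have h1 : ‖u - wn y‖ ≤ ‖u - un‖ + ‖wn y - un‖ := by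
            have := norm_sub_le_norm_sub_add_norm_sub u un (wn y)
            calc ‖u - wn y‖ ≤ ‖u - un‖ + ‖un - wn y‖ := norm_sub_le_norm_sub_add_norm_sub _ _ _
              _ = ‖u - un‖ + ‖wn y - un‖ := by rw [norm_sub_rev un]
          nlinarith [norm_nonneg (u - wn y), norm_nonneg (u - un), norm_nonneg (wn y - un),
            sq_nonneg (‖u - un‖ - ‖wn y - un‖)]
        have hI0 : Integrable (fun y => ‖wn y - un‖ ^ 2) μ := by
          refine ⟨((hwnm.sub measurable_const).norm.pow_const 2).aestronglyMeasurable, ?_⟩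
          refine HasFiniteIntegral.of_bounded (C := 9) ?_
          filter_upwards [hnorm1 (φ n)] with y hy
          have hle3 : ‖wn y - un‖ ≤ 3 := by
            calc ‖wn y - un‖ ≤ ‖wn y‖ + ‖un‖ := norm_sub_le _ _
              _ ≤ 3 := by rw [hy, hu'_norm]; norm_num
          have h0' : (0:ℝ) ≤ ‖wn y - un‖ := norm_nonneg _
          simp only [Real.norm_eq_abs, abs_pow, abs_of_nonneg h0']
          nlinarith
        have hintg2 : Integrable (fun y => 2 * ‖u - un‖ ^ 2 + 2 * ‖wn y - un‖ ^ 2) μ :=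
          (integrable_const _).add (hI0.const_mul 2)
        have heq2 : ∫ y, (2 * ‖u - un‖ ^ 2 + 2 * ‖wn y - un‖ ^ 2) ∂μ
            = 2 * ‖u - un‖ ^ 2 * T + 2 * ∫ y, ‖wn y - un‖ ^ 2 ∂μ := by
          rw [integral_add (integrable_const _) (hI0.const_mul 2), integral_const,
            integral_const_mul]
          simp only [hμ, measureReal_def, Measure.restrict_apply_univ, smul_eq_mul, hT]
          ring
        have h3 : ∫ y, ‖wn y - un‖ ^ 2 ∂μ ≤ 2 * T * (((φ n : ℝ) + 2)⁻¹) ^ 2 := by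
          have := hJ (φ n)
          have hrev : ∀ y, ‖wn y - un‖ ^ 2 = ‖w (φ n) y - u' (φ n)‖ ^ 2 := fun y => rfl
          exact this
        calc ∫ y, ‖u - wn y‖ ^ 2 ∂μ
            ≤ ∫ y, (2 * ‖u - un‖ ^ 2 + 2 * ‖wn y - un‖ ^ 2) ∂μ :=
              integral_mono hintg hintg2 hpt
          _ = 2 * ‖u - un‖ ^ 2 * T + 2 * ∫ y, ‖wn y - un‖ ^ 2 ∂μ := heq2
          _ ≤ 2 * T * ‖u - un‖ ^ 2 + 4 * T * (((φ n : ℝ) + 2)⁻¹) ^ 2 := by linarith [h3]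
      -- combine
      have h1 : (volume B).toReal ≤ (μ {y | δ ^ 2 ≤ ‖u - wn y‖ ^ 2}).toReal := by
        refine ENNReal.toReal_mono (measure_ne_top μ _) ?_
        exact le_trans hBle (measure_mono hss)
      have h2 : (μ {y | δ ^ 2 ≤ ‖u - wn y‖ ^ 2}).toReal
          ≤ (∫ y, ‖u - wn y‖ ^ 2 ∂μ) / δ ^ 2 := by
        rw [le_div_iff₀ (by positivity)]
        calc (μ _).toReal * δ ^ 2 = δ ^ 2 * (μ _).toReal := by ring
          _ ≤ _ := hcheb1
      calc (volume B).toReal ≤ (∫ y, ‖u - wn y‖ ^ 2 ∂μ) / δ ^ 2 := le_trans h1 h2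
        _ ≤ _ := by gcongr
    -- the bound tends to zero
    have htend : Filter.Tendsto
        (fun n => (2 * T * ‖u - u' (φ n)‖ ^ 2 + 4 * T * (((φ n : ℝ) + 2)⁻¹) ^ 2) / δ ^ 2)
        Filter.atTop (nhds 0) := by
      have htend1 : Filter.Tendsto (fun n => ‖u - u' (φ n)‖) Filter.atTop (nhds 0) := by
        have h1 : Filter.Tendsto (fun n => u - u' (φ n)) Filter.atTop (nhds (u - u)) :=
          tendsto_const_nhds.sub hconv
        rw [sub_self] at h1
        simpa using h1.norm
      have htend2 : Filter.Tendsto (fun n => ((φ n : ℝ) + 2)⁻¹) Filter.atTop (nhds 0) := by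
        have h1 : Filter.Tendsto (fun k : ℕ => ((k : ℝ) + 2)⁻¹) Filter.atTop (nhds 0) := by
          apply tendsto_inv_atTop_zero.comp
          apply Filter.tendsto_atTop_add_const_right
          exact tendsto_natCast_atTop_atTop
        exact h1.comp hφ.tendsto_atTop
      have hmain : Filter.Tendsto
          (fun n => 2 * T * ‖u - u' (φ n)‖ ^ 2 + 4 * T * (((φ n : ℝ) + 2)⁻¹) ^ 2)
          Filter.atTop (nhds (2 * T * 0 ^ 2 + 4 * T * 0 ^ 2)) :=
        ((htend1.pow 2).const_mul _).add ((htend2.pow 2).const_mul _)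
      have := hmain.div_const (δ ^ 2)
      simpa using this
    have : (volume B).toReal ≤ 0 := ge_of_tendsto htend
      (Filter.Eventually.of_forall hbound)
    have htr0 : (volume B).toReal = 0 :=
      le_antisymm this ENNReal.toReal_nonneg
    show volume B = 0
    exact (ENNReal.toReal_eq_zero_iff _).1 htr0 |>.resolve_right hBfin
  -- conclusion
  refine ⟨Q ∩ {y | u ∈ S y}, Set.inter_subset_left, ?_, u, hu_norm, fun y hy => hy.2⟩
  have hcover : Q \ (Q ∩ {y | u ∈ S y}) ⊆
      ⋃ k : ℕ, ({y | ((k : ℝ) + 1)⁻¹ ≤ Metric.infDist u ((S y : Set (EuclideanSpace ℂ (Fin m))))} ∩ Q) := by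
    rintro y ⟨hyQ, hyF⟩
    have hus : u ∉ (S y : Set (EuclideanSpace ℂ (Fin m))) := by
      intro h
      exact hyF ⟨hyQ, h⟩
    have hclosed : IsClosed ((S y : Set (EuclideanSpace ℂ (Fin m)))) :=
      (S y).closed_of_finiteDimensional
    have hpos : 0 < Metric.infDist u ((S y : Set (EuclideanSpace ℂ (Fin m)))) :=
      (hclosed.notMem_iff_infDist_pos ⟨0, (S y).zero_mem⟩).1 hus
    obtain ⟨k, hk⟩ := exists_nat_one_div_lt hpos
    refine Set.mem_iUnion.2 ⟨k, ⟨?_, hyQ⟩⟩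
    rw [one_div] at hk
    exact hk.le
  refine le_antisymm ?_ zero_le
  calc volume (Q \ (Q ∩ {y | u ∈ S y}))
      ≤ volume (⋃ k : ℕ, ({y | ((k : ℝ) + 1)⁻¹ ≤ Metric.infDist u ((S y : Set (EuclideanSpace ℂ (Fin m))))} ∩ Q)) :=
        measure_mono hcover
    _ ≤ ∑' k : ℕ, volume ({y | ((k : ℝ) + 1)⁻¹ ≤ Metric.infDist u ((S y : Set (EuclideanSpace ℂ (Fin m))))} ∩ Q) :=
        measure_iUnion_le _
    _ = 0 := by
        have : ∀ k : ℕ, volume ({y | ((k : ℝ) + 1)⁻¹ ≤ Metric.infDist u ((S y : Set (EuclideanSpace ℂ (Fin m))))} ∩ Q) = 0 :=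
          fun k => hcheb _ (by positivity)
        simp [this]
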